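/- The map ν ↦ ∫_0^T { Q^ν_t (b ν_t + f(t)) − η (ν_t)^2 − 2a Q^ν_t (ν_t − m(t)) − φ (Q^ν_t)^2 } dt with Q^ν_t = ∫_0^t (ν_u − m(u)) du is strictly concave on L^2([0,T]), provided 2a − b ≥ 0, η > 0 and φ > 0. -/

import Mathlib

open MeasureTheory intervalIntegral

section StrictConcavityAux
open Set Function

lemma key_quad (T : ℝ) (hT : 0 ≤ T) (w : ℝ → ℝ) (hw : IntervalIntegrable w volume 0 T) :
    ∫ t in (0:ℝ)..T, (∫ u in (0:ℝ)..t, w u) * w t = (∫ u in (0:ℝ)..T, w u) ^ 2 / 2 := by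
  set S : Set ℝ := Set.Ioc (0:ℝ) T with hS
  have hSm : MeasurableSet S := measurableSet_Ioc
  have hw' : IntegrableOn w S volume := by
    simpa [hS, intervalIntegrable_iff, Set.uIoc_of_le hT] using hw
  set μ : Measure ℝ := volume.restrict S with hμ
  have hwμ : Integrable w μ := hw'
  set W : ℝ → ℝ := fun x => ∫ u in (0:ℝ)..x, w u with hW
  have hWcont : ContinuousOn W (Set.uIcc 0 T) :=
    continuousOn_primitive_interval' hw Set.left_mem_uIcc
  -- the kernel
  set F : ℝ → ℝ → ℝ := fun u t => if u ≤ t then w u * w t else 0 with hF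
  have hFint : Integrable (Function.uncurry F) (μ.prod μ) := by
    have hmeas : AEStronglyMeasurable (Function.uncurry F) (μ.prod μ) := by
      have h1 : AEStronglyMeasurable (fun p : ℝ × ℝ => w p.1 * w p.2) (μ.prod μ) :=
        (hwμ.aestronglyMeasurable.comp_fst).mul (hwμ.aestronglyMeasurable.comp_snd)
      have h2 : MeasurableSet {p : ℝ × ℝ | p.1 ≤ p.2} :=
        measurableSet_le measurable_fst measurable_snd
      have : Function.uncurry F = Set.indicator {p : ℝ × ℝ | p.1 ≤ p.2}
          (fun p => w p.1 * w p.2) := by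
        ext p
        by_cases h : p.1 ≤ p.2 <;> simp [Function.uncurry, hF, h, Set.indicator]
      rw [this]
      exact h1.indicator h2
    refine Integrable.mono' ((hwμ.abs).mul_prod (hwμ.abs)) hmeas ?_
    refine Filter.Eventually.of_forall fun p => ?_
    by_cases h : p.1 ≤ p.2 <;>
      simp [Function.uncurry, hF, h, abs_mul, abs_nonneg, mul_nonneg, abs_abs, le_refl]
  have swap := MeasureTheory.integral_integral_swap hFint
  -- compute inner integrals
  have hWT : ∫ u in S, w u = W T := (intervalIntegral.integral_of_le hT).symm
  have inner_left : ∀ u ∈ S, (∫ t, F u t ∂μ) = w u * (W T - W u) := by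
    intro u hu
    have h1 : (fun t => F u t) = Set.indicator (Set.Ici u) (fun t => w u * w t) := by
      ext t; by_cases h : u ≤ t <;> simp [hF, h, Set.indicator]
    rw [h1, MeasureTheory.integral_indicator measurableSet_Ici, hμ,
      Measure.restrict_restrict measurableSet_Ici]
    have h2 : Set.Ici u ∩ S = Set.Icc u T := by
      ext t
      simp only [hS, Set.mem_inter_iff, Set.mem_Ici, Set.mem_Ioc, Set.mem_Icc]
      constructor
      · rintro ⟨h3, _, h5⟩; exact ⟨h3, h5⟩
      · rintro ⟨h3, h5⟩; exact ⟨h3, lt_of_lt_of_le hu.1 h3, h5⟩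
    rw [h2, MeasureTheory.integral_Icc_eq_integral_Ioc]
    have h3 : ∫ t in Set.Ioc u T, w u * w t = w u * ∫ t in Set.Ioc u T, w t := by
      rw [MeasureTheory.integral_const_mul]
    rw [h3]
    congr 1
    have h4 : ∫ t in Set.Ioc u T, w t = ∫ t in u..T, w t :=
      (intervalIntegral.integral_of_le hu.2).symm
    rw [h4, hW]
    rw [← intervalIntegral.integral_interval_sub_left hw
      (hw.mono_set (by rw [Set.uIcc_of_le hu.1.le, Set.uIcc_of_le hT]; exact Set.Icc_subset_Icc le_rfl hu.2))]
  have inner_right : ∀ t ∈ S, (∫ u, F u t ∂μ) = W t * w t := by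
    intro t ht
    have h1 : (fun u => F u t) = Set.indicator (Set.Iic t) (fun u => w u * w t) := by
      ext u; by_cases h : u ≤ t <;> simp [hF, h, Set.indicator]
    rw [h1, MeasureTheory.integral_indicator measurableSet_Iic, hμ,
      Measure.restrict_restrict measurableSet_Iic]
    have h2 : Set.Iic t ∩ S = Set.Ioc 0 t := by
      ext u
      simp only [hS, Set.mem_inter_iff, Set.mem_Iic, Set.mem_Ioc]
      constructor
      · rintro ⟨h3, h4, _⟩; exact ⟨h4, h3⟩
      · rintro ⟨h4, h3⟩; exact ⟨h3, h4, h3.trans ht.2⟩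
    rw [h2]
    have h3 : ∫ u in Set.Ioc 0 t, w u * w t = (∫ u in Set.Ioc 0 t, w u) * w t := by
      rw [MeasureTheory.integral_mul_const]
    rw [h3]
    congr 1
    exact (intervalIntegral.integral_of_le ht.1.le).symm
  -- integrability of w * W on S
  have hwW : IntegrableOn (fun u => w u * W u) S volume := by
    have := hw.mul_continuousOn hWcont
    simpa [hS, intervalIntegrable_iff, Set.uIoc_of_le hT] using this
  -- rewrite the two sides of swap
  have lhs_eq : (∫ u, ∫ t, F u t ∂μ ∂μ) = W T * W T - ∫ u in S, w u * W u := by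
    have e1 : (∫ u, ∫ t, F u t ∂μ ∂μ) = ∫ u in S, w u * (W T - W u) := by
      rw [hμ]
      exact MeasureTheory.setIntegral_congr_fun hSm fun u hu => inner_left u hu
    rw [e1]
    have e2 : ∀ u, w u * (W T - W u) = w u * W T - w u * W u := fun u => by ring
    simp_rw [e2]
    rw [MeasureTheory.integral_sub (hw'.mul_const _) hwW,
      MeasureTheory.integral_mul_const, hWT]
  have rhs_eq : (∫ t, ∫ u, F u t ∂μ ∂μ) = ∫ t in S, W t * w t := by
    rw [hμ]
    exact MeasureTheory.setIntegral_congr_fun hSm fun t ht => inner_right t ht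
  have comm_eq : (∫ u in S, w u * W u) = ∫ t in S, W t * w t := by
    congr 1; ext u; ring
  rw [lhs_eq, rhs_eq, comm_eq] at swap
  have hfin : ∫ t in S, W t * w t = W T ^ 2 / 2 := by linarith
  rw [intervalIntegral.integral_of_le hT]
  exact hfin

end StrictConcavityAux

/-- Strict concavity of the broker's (pathwise) objective
`H(ν) = ∫_0^T { Q^ν_t (b ν_t + f(t)) − η ν_t² − 2a Q^ν_t (ν_t − m(t)) − φ (Q^ν_t)² } dt`
with `Q^ν_t = ∫_0^t (ν_u − m(u)) du`, provided `2a − b ≥ 0`, `η > 0`, `φ > 0`. -/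

theorem stmt_2 (T b η a φ : ℝ) (hT : 0 < T) (hη : 0 < η) (ha : 0 < a) (hφ : 0 < φ)
    (hab : 0 ≤ 2 * a - b)
    (f m : ℝ → ℝ)
    (hf : IntervalIntegrable f volume 0 T)
    (hm : IntervalIntegrable m volume 0 T)
    (hm2 : IntervalIntegrable (fun t => (m t) ^ 2) volume 0 T)
    (H : (ℝ → ℝ) → ℝ)
    (hH : ∀ v : ℝ → ℝ, H v =
      ∫ t in (0:ℝ)..T,
        ((∫ u in (0:ℝ)..t, (v u - m u)) * (b * v t + f t) - η * (v t) ^ 2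
          - 2 * a * (∫ u in (0:ℝ)..t, (v u - m u)) * (v t - m t)
          - φ * (∫ u in (0:ℝ)..t, (v u - m u)) ^ 2))
    (ζ ν : ℝ → ℝ)
    (hζ : IntervalIntegrable ζ volume 0 T)
    (hν : IntervalIntegrable ν volume 0 T)
    (hζ2 : IntervalIntegrable (fun t => (ζ t) ^ 2) volume 0 T)
    (hν2 : IntervalIntegrable (fun t => (ν t) ^ 2) volume 0 T)
    (hdiff : 0 < volume {t ∈ Set.Ioc 0 T | ζ t ≠ ν t})
    (ρ : ℝ) (hρ : ρ ∈ Set.Ioo (0:ℝ) 1) :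
    ρ * H ζ + (1 - ρ) * H ν < H (fun t => ρ * ζ t + (1 - ρ) * ν t) := by
  obtain ⟨hρ0, hρ1⟩ := hρ
  have hρ1' : 0 < 1 - ρ := by linarith
  have hT' : (0:ℝ) ≤ T := hT.le
  -- notation
  set Qz : ℝ → ℝ := fun x => ∫ u in (0:ℝ)..x, (ζ u - m u) with hQzdef
  set Qn : ℝ → ℝ := fun x => ∫ u in (0:ℝ)..x, (ν u - m u) with hQndef
  set W : ℝ → ℝ := fun x => ∫ u in (0:ℝ)..x, (ζ u - ν u) with hWdef
  -- integrability of integrands on subintervals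
  have hsub : ∀ t ∈ Set.uIcc (0:ℝ) T, Set.uIcc (0:ℝ) t ⊆ Set.uIcc (0:ℝ) T := by
    intro t ht
    exact Set.uIcc_subset_uIcc Set.left_mem_uIcc ht
  have hzm : IntervalIntegrable (fun u => ζ u - m u) volume 0 T := hζ.sub hm
  have hnm : IntervalIntegrable (fun u => ν u - m u) volume 0 T := hν.sub hm
  have hwI : IntervalIntegrable (fun u => ζ u - ν u) volume 0 T := hζ.sub hν
  -- linearity of Q at each time
  have hQρ : ∀ t ∈ Set.uIcc (0:ℝ) T,
      (∫ u in (0:ℝ)..t, (ρ * ζ u + (1 - ρ) * ν u - m u)) = ρ * Qz t + (1 - ρ) * Qn t := by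
    intro t ht
    have h1 : IntervalIntegrable (fun u => ζ u - m u) volume 0 t := hzm.mono_set (hsub t ht)
    have h2 : IntervalIntegrable (fun u => ν u - m u) volume 0 t := hnm.mono_set (hsub t ht)
    have e : ∫ u in (0:ℝ)..t, (ρ * ζ u + (1 - ρ) * ν u - m u)
        = ∫ u in (0:ℝ)..t, (ρ * (ζ u - m u) + (1 - ρ) * (ν u - m u)) :=
      intervalIntegral.integral_congr (fun u _ => by ring)
    rw [e, intervalIntegral.integral_add (h1.const_mul ρ) (h2.const_mul (1 - ρ)),
      intervalIntegral.integral_const_mul, intervalIntegral.integral_const_mul]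
  have hWt : ∀ t ∈ Set.uIcc (0:ℝ) T, W t = Qz t - Qn t := by
    intro t ht
    have h1 : IntervalIntegrable (fun u => ζ u - m u) volume 0 t := hzm.mono_set (hsub t ht)
    have h2 : IntervalIntegrable (fun u => ν u - m u) volume 0 t := hnm.mono_set (hsub t ht)
    have e : W t = ∫ u in (0:ℝ)..t, ((ζ u - m u) - (ν u - m u)) :=
      intervalIntegral.integral_congr (fun u _ => by ring)
    rw [e, intervalIntegral.integral_sub h1 h2]
  -- continuity of primitives
  have hQzc : ContinuousOn Qz (Set.uIcc 0 T) :=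
    continuousOn_primitive_interval' hzm Set.left_mem_uIcc
  have hQnc : ContinuousOn Qn (Set.uIcc 0 T) :=
    continuousOn_primitive_interval' hnm Set.left_mem_uIcc
  have hWc : ContinuousOn W (Set.uIcc 0 T) :=
    continuousOn_primitive_interval' hwI Set.left_mem_uIcc
  -- integrability of the three integrands
  have hgz : IntervalIntegrable (fun t => Qz t * (b * ζ t + f t) - η * (ζ t) ^ 2
      - 2 * a * Qz t * (ζ t - m t) - φ * Qz t ^ 2) volume 0 T := by
    refine ((((((hζ.const_mul b).add hf).continuousOn_mul hQzc).sub
      (hζ2.const_mul η)).sub ((hzm).continuousOn_mul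
        (continuousOn_const.mul hQzc))).sub ?_)
    exact ((continuousOn_const.mul (hQzc.pow 2)).intervalIntegrable)
  have hgn : IntervalIntegrable (fun t => Qn t * (b * ν t + f t) - η * (ν t) ^ 2
      - 2 * a * Qn t * (ν t - m t) - φ * Qn t ^ 2) volume 0 T := by
    refine ((((((hν.const_mul b).add hf).continuousOn_mul hQnc).sub
      (hν2.const_mul η)).sub ((hnm).continuousOn_mul
        (continuousOn_const.mul hQnc))).sub ?_)
    exact ((continuousOn_const.mul (hQnc.pow 2)).intervalIntegrable)
  -- integrability of (ζ-ν)^2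
  have hw2 : IntervalIntegrable (fun t => (ζ t - ν t) ^ 2) volume 0 T := by
    rw [intervalIntegrable_iff] at hwI hζ2 hν2 ⊢
    have hmeas : AEStronglyMeasurable (fun t => (ζ t - ν t) ^ 2)
        (volume.restrict (Set.uIoc 0 T)) := by
      have := hwI.aestronglyMeasurable
      simp only [sq]; exact this.mul this
    refine Integrable.mono' ((hζ2.const_mul 2).add (hν2.const_mul 2)) hmeas ?_
    refine Filter.Eventually.of_forall fun t => ?_
    have h1 : |(ζ t - ν t) ^ 2| = (ζ t - ν t) ^ 2 := abs_of_nonneg (sq_nonneg _)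
    simp only [Pi.add_apply, Real.norm_eq_abs, h1]
    nlinarith [sq_nonneg (ζ t + ν t)]
  have hWw : IntervalIntegrable (fun t => W t * (ζ t - ν t)) volume 0 T :=
    hwI.continuousOn_mul hWc
  have hW2 : IntervalIntegrable (fun t => W t ^ 2) volume 0 T :=
    (hWc.pow 2).intervalIntegrable
  have hgq : IntervalIntegrable (fun t => η * (ζ t - ν t) ^ 2 + φ * W t ^ 2
      + (2 * a - b) * (W t * (ζ t - ν t))) volume 0 T :=
    ((hw2.const_mul η).add (hW2.const_mul φ)).add (hWw.const_mul (2 * a - b))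
  -- the pointwise convexity identity
  have hpt : Set.EqOn
      (fun t => (∫ u in (0:ℝ)..t, (ρ * ζ u + (1 - ρ) * ν u - m u)) *
          (b * (ρ * ζ t + (1 - ρ) * ν t) + f t)
        - η * (ρ * ζ t + (1 - ρ) * ν t) ^ 2
        - 2 * a * (∫ u in (0:ℝ)..t, (ρ * ζ u + (1 - ρ) * ν u - m u)) *
          (ρ * ζ t + (1 - ρ) * ν t - m t)
        - φ * (∫ u in (0:ℝ)..t, (ρ * ζ u + (1 - ρ) * ν u - m u)) ^ 2)
      (fun t => ρ * (Qz t * (b * ζ t + f t) - η * (ζ t) ^ 2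
          - 2 * a * Qz t * (ζ t - m t) - φ * Qz t ^ 2)
        + (1 - ρ) * (Qn t * (b * ν t + f t) - η * (ν t) ^ 2
          - 2 * a * Qn t * (ν t - m t) - φ * Qn t ^ 2)
        + ρ * (1 - ρ) * (η * (ζ t - ν t) ^ 2 + φ * W t ^ 2
          + (2 * a - b) * (W t * (ζ t - ν t))))
      (Set.uIcc 0 T) := by
    intro t ht
    simp only
    rw [hQρ t ht, hWt t ht]
    ring
  -- the integral identity
  have hkey : H (fun t => ρ * ζ t + (1 - ρ) * ν t)
      = ρ * H ζ + (1 - ρ) * H ν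
        + ρ * (1 - ρ) * ∫ t in (0:ℝ)..T, (η * (ζ t - ν t) ^ 2 + φ * W t ^ 2
          + (2 * a - b) * (W t * (ζ t - ν t))) := by
    rw [hH, hH, hH]
    rw [intervalIntegral.integral_congr hpt]
    rw [intervalIntegral.integral_add ((hgz.const_mul ρ).add (hgn.const_mul (1 - ρ)))
      (hgq.const_mul (ρ * (1 - ρ))),
      intervalIntegral.integral_add (hgz.const_mul ρ) (hgn.const_mul (1 - ρ)),
      intervalIntegral.integral_const_mul, intervalIntegral.integral_const_mul,
      intervalIntegral.integral_const_mul]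
  -- positivity of the quadratic correction
  have hWwval : (∫ t in (0:ℝ)..T, W t * (ζ t - ν t))
      = (∫ u in (0:ℝ)..T, (ζ u - ν u)) ^ 2 / 2 := key_quad T hT' (fun u => ζ u - ν u) hwI
  have hw2pos : 0 < ∫ t in (0:ℝ)..T, (ζ t - ν t) ^ 2 := by
    rw [intervalIntegral.integral_pos_iff_support_of_nonneg_ae
      (Filter.Eventually.of_forall fun t => sq_nonneg _) hw2]
    refine ⟨hT, lt_of_lt_of_le hdiff (measure_mono ?_)⟩
    rintro t ⟨ht1, ht2⟩
    refine ⟨?_, ht1⟩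
    simp only [Function.mem_support]
    intro h
    exact ht2 (by nlinarith [sq_abs (ζ t - ν t)])
  have hW2nn : 0 ≤ ∫ t in (0:ℝ)..T, W t ^ 2 :=
    intervalIntegral.integral_nonneg hT' fun t _ => sq_nonneg _
  have hP : 0 < ∫ t in (0:ℝ)..T, (η * (ζ t - ν t) ^ 2 + φ * W t ^ 2
      + (2 * a - b) * (W t * (ζ t - ν t))) := by
    rw [intervalIntegral.integral_add ((hw2.const_mul η).add (hW2.const_mul φ))
      (hWw.const_mul (2 * a - b)),
      intervalIntegral.integral_add (hw2.const_mul η) (hW2.const_mul φ),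
      intervalIntegral.integral_const_mul, intervalIntegral.integral_const_mul,
      intervalIntegral.integral_const_mul, hWwval]
    have h1 : 0 ≤ (2 * a - b) * ((∫ u in (0:ℝ)..T, (ζ u - ν u)) ^ 2 / 2) :=
      mul_nonneg hab (by positivity)
    nlinarith
  rw [hkey]
  nlinarith [mul_pos (mul_pos hρ0 hρ1') hP]
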